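/- arXiv:1006.2493 — 3 statements merged into one kernel-verified Lean document; each statement's English description precedes it below -/
import Mathlib

section
/- Let G be a graph with minimum fitness counterexample properties such that G has a vertex v of degree 1 with neighbour z of degree at least 2. Then the graph G' = G \ {v} satisfies r(G') ≤ r(G) - 1/2 and D(G') ≥ D(G) - 1. -/
/-- The inverse degree `r(G) = ∑_v 1/deg(v)` of a finite graph. -/
noncomputable def invDeg {V : Type*} [Fintype V] (G : SimpleGraph V) : ℝ := by
  classical exact ∑ v : V, (1 : ℝ) / (G.degree v)

lemma invDeg_eq {V : Type*} [Fintype V] (G : SimpleGraph V)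
    [inst : ∀ u, Fintype (G.neighborSet u)] :
    invDeg G = ∑ u : V, (1 : ℝ) / (G.degree u) := by
  unfold invDeg
  refine Finset.sum_congr rfl fun u _ => ?_
  congr!

section aux
variable {V : Type*} [Fintype V] [DecidableEq V] (G : SimpleGraph V) [DecidableRel G.Adj]

lemma leaf_not_in_path {v z : V} (hz : G.neighborSet v = {z}) :
    ∀ {a b : V} (p : G.Walk a b), p.IsPath → a ≠ v → b ≠ v → v ∉ p.support := by
  intro a b p
  induction p with
  | nil => intro _ ha _ h; simp at h; exact ha h.symm
  | @cons a c b h q ih =>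
    intro hp ha hb hv
    have hq : q.IsPath := hp.of_cons
    have hanq : a ∉ q.support := (SimpleGraph.Walk.cons_isPath_iff _ _).mp hp |>.2
    by_cases hc : c = v
    · subst hc
      have haz : a = z := by
        have : a ∈ G.neighborSet c := (G.adj_comm a c).mp h
        rw [hz] at this; exact this
      cases q with
      | nil => exact hb rfl
      | @cons _ w _ h2 q2 =>
        have hwz : w = z := by
          have : w ∈ G.neighborSet c := h2
          rw [hz] at this; exact this
        apply hanq
        rw [SimpleGraph.Walk.support_cons]
        exact List.mem_cons_of_mem _ (haz ▸ hwz ▸ q2.start_mem_support)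
    · have hm : v = a ∨ v ∈ q.support := by simpa using hv
      rcases hm with hm | hm
      · exact ha hm.symm
      · exact ih hq hc hb hm

lemma reach_in_induce {s : Set V} :
    ∀ {a b : V} (p : G.Walk a b) (_ : ∀ x ∈ p.support, x ∈ s) (ha : a ∈ s) (hb : b ∈ s),
      (G.induce s).Reachable ⟨a, ha⟩ ⟨b, hb⟩ := by
  intro a b p
  induction p with
  | nil => intro _ _ _; rfl
  | @cons a c b h q ih =>
    intro hsup ha hb
    have hc : c ∈ s := hsup c (by simp)
    have hadj : (G.induce s).Adj ⟨a, ha⟩ ⟨c, hc⟩ := h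
    exact hadj.reachable.trans (ih (fun x hx => hsup x (by simp [hx])) hc hb)

end aux

theorem remove_degree_one_vertex {V : Type*} [Fintype V] [DecidableEq V]
    (G : SimpleGraph V) [DecidableRel G.Adj] (hconn : G.Connected)
    (hcard : 3 ≤ Fintype.card V) (v z : V)
    (hdv : G.degree v = 1) (hz : G.neighborSet v = {z}) (hdz : 2 ≤ G.degree z) :
    invDeg (G.induce {u | u ≠ v}) ≤ invDeg G - 1 / 2 ∧
      G.diam ≤ (G.induce {u | u ≠ v}).diam + 1 := by
  classical
  set s : Set V := {u | u ≠ v} with hs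
  have hadjvz : G.Adj v z := by
    have : z ∈ G.neighborSet v := by rw [hz]; rfl
    exact this
  have hzv : z ≠ v := fun h => G.loopless.irrefl v (h ▸ hadjvz)
  -- connectivity of the induced graph
  have hreach : ∀ a b : ↥s, (G.induce s).Reachable a b := by
    rintro ⟨a, ha⟩ ⟨b, hb⟩
    obtain ⟨w⟩ := hconn a b
    have hpath := w.toPath.2
    have hv : v ∉ (w.toPath : G.Walk a b).support :=
      leaf_not_in_path G hz _ hpath ha hb
    refine reach_in_induce G (w.toPath : G.Walk a b) ?_ ha hb
    intro x hx hxv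
    exact hv (hxv ▸ hx)
  have hconn' : (G.induce s).Connected := by
    rw [SimpleGraph.connected_iff]
    exact ⟨hreach, ⟨⟨z, hzv⟩⟩⟩
  -- edist comparison via the inclusion hom
  let φ : G.induce s →g G := ⟨Subtype.val, fun {a b} h => h⟩
  have hedist : ∀ a b : ↥s, G.edist ↑a ↑b ≤ (G.induce s).edist a b := by
    intro a b
    obtain ⟨p, hp⟩ := (hreach a b).exists_walk_length_eq_edist
    calc G.edist ↑a ↑b ≤ (p.map φ).length := SimpleGraph.edist_le (p.map φ)
      _ = (G.induce s).edist a b := by rw [SimpleGraph.Walk.length_map, hp]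
  have hediam_ne : (G.induce s).ediam ≠ ⊤ := by
    have : Nonempty ↥s := ⟨⟨z, hzv⟩⟩
    obtain ⟨a, b, hab⟩ := SimpleGraph.exists_edist_eq_ediam_of_finite (G := G.induce s)
    rw [← hab]
    exact SimpleGraph.edist_ne_top_iff_reachable.mpr (hreach a b)
  have hediam : G.ediam ≤ (G.induce s).ediam + 1 := by
    apply SimpleGraph.ediam_le_of_edist_le
    have key : ∀ b : V, b ≠ v → G.edist v b ≤ (G.induce s).ediam + 1 := by
      intro b hb
      calc G.edist v b ≤ G.edist v z + G.edist z b := SimpleGraph.edist_triangle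
        _ ≤ 1 + (G.induce s).ediam := by
            gcongr
            · exact le_of_eq (SimpleGraph.edist_eq_one_iff_adj.mpr hadjvz)
            · exact le_trans (hedist ⟨z, hzv⟩ ⟨b, hb⟩) SimpleGraph.edist_le_ediam
        _ = (G.induce s).ediam + 1 := add_comm _ _
    intro a b
    by_cases ha : a = v
    · by_cases hb : b = v
      · rw [ha, hb, SimpleGraph.edist_self]; exact zero_le
      · rw [ha]; exact key b hb
    · by_cases hb : b = v
      · rw [hb, SimpleGraph.edist_comm]; exact key a ha
      · exact le_trans (le_trans (hedist ⟨a, ha⟩ ⟨b, hb⟩) SimpleGraph.edist_le_ediam)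
          (le_add_right le_rfl)
  have hdiam : G.diam ≤ (G.induce s).diam + 1 := by
    have hnt : (G.induce s).ediam + 1 ≠ ⊤ :=
      WithTop.add_ne_top.mpr ⟨hediam_ne, WithTop.one_ne_top⟩
    have := ENat.toNat_le_toNat hediam hnt
    rwa [ENat.toNat_add hediam_ne ENat.one_ne_top, ENat.toNat_one] at this
  refine ⟨?_, hdiam⟩
  -- degree computations
  have hdeg : ∀ x : ↥s, (G.induce s).degree x = ((G.neighborFinset ↑x).erase v).card := by
    intro x
    rw [← SimpleGraph.card_neighborSet_eq_degree]
    have e : ((G.induce s).neighborSet x) ≃ ((G.neighborSet ↑x) \ {v} : Set V) :=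
      { toFun := fun y => ⟨y.1.1, ⟨y.2, y.1.2⟩⟩
        invFun := fun w => ⟨⟨w.1, w.2.2⟩, w.2.1⟩
        left_inv := fun y => rfl
        right_inv := fun w => rfl }
    rw [Fintype.card_congr e, ← Set.toFinset_card]
    congr 1
    ext w
    simp [SimpleGraph.mem_neighborFinset, and_comm]
  have hvnmem : ∀ u : V, u ≠ z → v ∉ G.neighborFinset u := by
    intro u hu hmem
    rw [SimpleGraph.mem_neighborFinset] at hmem
    have h2 : u ∈ G.neighborSet v := (G.adj_comm u v).mp hmem
    rw [hz] at h2
    exact hu h2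
  have hvz_mem : v ∈ G.neighborFinset z := by
    rw [SimpleGraph.mem_neighborFinset]; exact hadjvz.symm
  have hstof : Set.toFinset s = Finset.univ.erase v := by
    ext u; simp [hs, Finset.mem_erase]
  set f : V → ℝ := fun u => 1 / (G.degree u) with hf
  set g : V → ℝ := fun u => 1 / (((G.neighborFinset u).erase v).card : ℝ) with hg
  have h1 : invDeg (G.induce s) = ∑ u ∈ Finset.univ.erase v, g u := by
    rw [invDeg_eq, ← hstof, ← Finset.sum_set_coe (f := g) (s := s)]
    refine Finset.sum_congr rfl fun x _ => ?_
    rw [hdeg x, hg]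
  have hzmem : z ∈ Finset.univ.erase v := Finset.mem_erase.mpr ⟨hzv, Finset.mem_univ z⟩
  have h2 : ∑ u ∈ Finset.univ.erase v, g u
      = g z + ∑ u ∈ (Finset.univ.erase v).erase z, g u :=
    (Finset.add_sum_erase _ g hzmem).symm
  have h3' : invDeg G = ∑ u : V, f u := invDeg_eq G
  have h3 : invDeg G = f v + (f z + ∑ u ∈ (Finset.univ.erase v).erase z, f u) := by
    rw [h3', ← Finset.add_sum_erase _ f (Finset.mem_univ v), ← Finset.add_sum_erase _ f hzmem]
  have h4 : ∀ u ∈ (Finset.univ.erase v).erase z, g u = f u := by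
    intro u hu
    rw [Finset.mem_erase, Finset.mem_erase] at hu
    rw [hg, hf]
    simp only
    rw [Finset.erase_eq_of_notMem (hvnmem u hu.1), SimpleGraph.card_neighborFinset_eq_degree]
  have hgz : g z = 1 / ((G.degree z : ℝ) - 1) := by
    rw [hg]
    simp only
    rw [Finset.card_erase_of_mem hvz_mem, SimpleGraph.card_neighborFinset_eq_degree]
    have : (1:ℕ) ≤ G.degree z := le_trans (by norm_num) hdz
    rw [Nat.cast_sub this, Nat.cast_one]
  have hfv : f v = 1 := by rw [hf]; simp [hdv]
  have key : g z ≤ f v + f z - 1/2 := by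
    rw [hgz, hfv, hf]
    simp only
    have hd2 : (2:ℝ) ≤ (G.degree z : ℝ) := by exact_mod_cast hdz
    have hd1 : (0:ℝ) < (G.degree z : ℝ) - 1 := by linarith
    have hd0 : (0:ℝ) < (G.degree z : ℝ) := by linarith
    have h6 : 1/((G.degree z : ℝ)-1) ≤ 1/2 + 1/(G.degree z : ℝ) := by
      rw [div_add_div _ _ two_ne_zero hd0.ne', div_le_div_iff₀ hd1 (by positivity)]
      nlinarith [sq_nonneg ((G.degree z : ℝ) - 2)]
    linarith
  rw [h1, h2, h3, Finset.sum_congr rfl h4]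
  linarith
end

section
/- Let G be a connected graph, v a degree-2 vertex whose two neighbours a, b are adjacent and each have degree at least 3, with v not an endpoint of any diameter path. Then for G' = G \ {v}: G' is connected, D(G') ≥ D(G), and r(G') ≤ r(G) - 1/2 + 1/3. -/
private lemma one_div_sub_one_le {x : ℝ} (hx : 3 ≤ x) : 1 / (x - 1) ≤ 1 / x + 1 / 6 := by
  have h1 : (0:ℝ) < x := by linarith
  have h2 : (0:ℝ) < x - 1 := by linarith
  rw [div_add_div _ _ (ne_of_gt h1) (by norm_num), div_le_div_iff₀ h2 (by positivity)]
  nlinarith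

theorem remove_degree_two_vertex {V : Type*} [Fintype V] [DecidableEq V]
    (G : SimpleGraph V) [DecidableRel G.Adj] (hconn : G.Connected)
    (v a b : V) (hdv : G.degree v = 2) (hnb : G.neighborSet v = {a, b})
    (hab : G.Adj a b) (hda : 3 ≤ G.degree a) (hdb : 3 ≤ G.degree b)
    (hnotend : ∀ u : V, G.dist u v < G.diam) :
    (G.induce {u | u ≠ v}).Connected ∧
      G.diam ≤ (G.induce {u | u ≠ v}).diam ∧
      invDeg (G.induce {u | u ≠ v}) ≤ invDeg G - 1 / 2 + 1 / 3 := by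
  classical
  set S : Set V := {u | u ≠ v} with hS
  set G' : SimpleGraph S := G.induce S with hG'
  have hva : G.Adj v a := by
    have : a ∈ G.neighborSet v := by rw [hnb]; exact Set.mem_insert _ _
    exact this
  have hvb : G.Adj v b := by
    have : b ∈ G.neighborSet v := by rw [hnb]; exact Set.mem_insert_of_mem _ rfl
    exact this
  have hav : a ≠ v := fun h => G.loopless.irrefl v (h ▸ hva)
  have hbv : b ≠ v := fun h => G.loopless.irrefl v (h ▸ hvb)
  have hmem : ∀ x, G.Adj v x → x = a ∨ x = b := by
    intro x hx
    have : x ∈ G.neighborSet v := hx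
    rw [hnb] at this
    simpa using this
  have haS : a ∈ S := hav
  have hbS : b ∈ S := hbv
  -- adjacency in induced graph
  have hadj' : ∀ (x y : S), G.Adj x y → G'.Adj x y := fun x y h => h
  -- Connectivity
  set f : V → S := fun u => if h : u = v then ⟨a, hav⟩ else ⟨u, h⟩ with hf
  have hfne : ∀ (u : V) (hu : u ≠ v), f u = ⟨u, hu⟩ := by
    intro u hu; simp [hf, hu]
  have hstep : ∀ x y : V, G.Adj x y → G'.Reachable (f x) (f y) := by
    have hfv : f v = ⟨a, hav⟩ := by simp [hf]
    intro x y hxy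
    by_cases hx : x = v
    · have hy : y ≠ v := fun h => G.loopless.irrefl v (by rw [hx, h] at hxy; exact hxy)
      rcases hmem y (by rwa [hx] at hxy) with hy2 | hy2
      · subst hy2; rw [hx, hfv, hfne y hy]
      · subst hy2; rw [hx, hfv, hfne y hy]
        exact (hadj' ⟨a, hav⟩ ⟨y, hy⟩ hab).reachable
    · by_cases hy : y = v
      · rcases hmem x (by rw [hy] at hxy; exact hxy.symm) with hx2 | hx2
        · subst hx2; rw [hy, hfv, hfne x hx]
        · subst hx2; rw [hy, hfv, hfne x hx]
          exact (hadj' ⟨x, hx⟩ ⟨a, hav⟩ hab.symm).reachable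
      · rw [hfne x hx, hfne y hy]
        exact (hadj' ⟨x, hx⟩ ⟨y, hy⟩ hxy).reachable
  have hwalk : ∀ (x y : V), G.Walk x y → G'.Reachable (f x) (f y) := by
    intro x y p
    induction p with
    | nil => exact SimpleGraph.Reachable.refl _
    | cons h _ ih => exact (hstep _ _ h).trans ih
  have hG'conn : G'.Connected := by
    have hne : Nonempty S := ⟨⟨a, haS⟩⟩
    refine ⟨?_⟩
    rintro ⟨x, hx⟩ ⟨y, hy⟩
    obtain ⟨p⟩ := hconn x y
    have := hwalk x y p
    rwa [hfne x hx, hfne y hy] at this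
  refine ⟨hG'conn, ?_, ?_⟩
  -- Diameter
  · have hNV : Nonempty V := ⟨v⟩
    have hdiam_pos : 0 < G.diam := by
      have := hnotend v
      simpa using lt_of_le_of_lt (Nat.zero_le _) this
    obtain ⟨x, y, hxy⟩ := SimpleGraph.exists_dist_eq_diam (G := G)
    have hx : x ≠ v := by
      rintro rfl
      have := hnotend y
      rw [SimpleGraph.dist_comm] at hxy
      omega
    have hy : y ≠ v := by
      rintro rfl
      have := hnotend x
      omega
    have hediam' : G'.ediam ≠ ⊤ := by
      have hle : G'.ediam ≤ (Fintype.card S : ℕ∞) := by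
        apply SimpleGraph.ediam_le_of_edist_le
        intro u w
        obtain ⟨p⟩ := hG'conn u w
        calc G'.edist u w ≤ p.bypass.length := SimpleGraph.edist_le _
          _ ≤ (Fintype.card S : ℕ∞) := by
              exact_mod_cast Nat.cast_le.mpr (le_of_lt p.bypass_isPath.length_lt)
      exact fun h => by simp [h] at hle
    obtain ⟨p, hp⟩ := hG'conn.exists_walk_length_eq_dist ⟨x, hx⟩ ⟨y, hy⟩
    have hmap : G.dist x y ≤ G'.dist ⟨x, hx⟩ ⟨y, hy⟩ := by
      have := SimpleGraph.dist_le (p.map (SimpleGraph.Embedding.induce S).toHom)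
      rwa [SimpleGraph.Walk.length_map, hp] at this
    calc G.diam = G.dist x y := hxy.symm
      _ ≤ G'.dist ⟨x, hx⟩ ⟨y, hy⟩ := hmap
      _ ≤ G'.diam := SimpleGraph.dist_le_diam hediam'
  -- Inverse degree
  · -- degree computation in the induced graph
    have hdeg : ∀ (w : V) (hw : w ∈ S) (inst : Fintype (G'.neighborSet ⟨w, hw⟩)),
        @SimpleGraph.degree _ G' ⟨w, hw⟩ inst = ((G.neighborFinset w).erase v).card := by
      intro w hw inst
      rw [SimpleGraph.degree]
      apply Finset.card_bij (fun (x : S) _ => (x : V))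
      · rintro ⟨x, hx⟩ hmem'
        rw [SimpleGraph.mem_neighborFinset] at hmem'
        rw [Finset.mem_erase, SimpleGraph.mem_neighborFinset]
        exact ⟨hx, hmem'⟩
      · rintro ⟨x, _⟩ _ ⟨y, _⟩ _ h
        exact Subtype.ext h
      · intro x hx
        rw [Finset.mem_erase, SimpleGraph.mem_neighborFinset] at hx
        refine ⟨⟨x, hx.1⟩, ?_, rfl⟩
        rw [SimpleGraph.mem_neighborFinset]
        exact hx.2
    have hdegA : ∀ inst, @SimpleGraph.degree _ G' ⟨a, haS⟩ inst = G.degree a - 1 := by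
      intro inst
      rw [hdeg a haS, Finset.card_erase_of_mem (by rw [SimpleGraph.mem_neighborFinset]; exact hva.symm)]
      rfl
    have hdegB : ∀ inst, @SimpleGraph.degree _ G' ⟨b, hbS⟩ inst = G.degree b - 1 := by
      intro inst
      rw [hdeg b hbS, Finset.card_erase_of_mem (by rw [SimpleGraph.mem_neighborFinset]; exact hvb.symm)]
      rfl
    have hdegW : ∀ (w : V) (hw : w ∈ S) inst, w ≠ a → w ≠ b →
        @SimpleGraph.degree _ G' ⟨w, hw⟩ inst = G.degree w := by
      intro w hw inst hwa hwb
      have h' : v ∉ G.neighborFinset w := by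
        rw [SimpleGraph.mem_neighborFinset]
        intro hm
        rcases hmem w hm.symm with rfl | rfl
        · exact hwa rfl
        · exact hwb rfl
      rw [hdeg w hw, Finset.erase_eq_of_notMem h']
      rfl
    -- express both sums
    set g : V → ℝ := fun w =>
      if w = a then 1 / ((G.degree a - 1 : ℕ) : ℝ)
      else if w = b then 1 / ((G.degree b - 1 : ℕ) : ℝ)
      else 1 / (G.degree w : ℝ) with hg
    have hdeg_eq : ∀ (x : S) (inst : Fintype (G'.neighborSet x)),
        (1 : ℝ) / (@SimpleGraph.degree _ G' x inst) = g x.1 := by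
      rintro ⟨w, hw⟩ inst
      by_cases hwa : w = a
      · subst hwa
        rw [hdegA inst]
        simp [hg]
      · by_cases hwb : w = b
        · subst hwb
          rw [hdegB inst]
          simp [hg, hwa]
        · rw [hdegW w hw inst hwa hwb]
          simp [hg, hwa, hwb]
    have hsum1 : invDeg G' = ∑ w ∈ Finset.univ.erase v, g w := by
      unfold invDeg
      trans (∑ x : S, g x.1)
      · exact Finset.sum_congr rfl fun x _ => hdeg_eq x _
      · exact (Finset.sum_subtype (Finset.univ.erase v)
          (p := fun u => u ∈ S) (fun x => by simp [hS]) g).symm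
    set s0 : Finset V := Finset.univ.erase v with hs0
    set s1 : Finset V := s0.erase a with hs1
    set s2 : Finset V := s1.erase b with hs2
    have ha0 : a ∈ s0 := Finset.mem_erase.mpr ⟨hav, Finset.mem_univ _⟩
    have hb1 : b ∈ s1 := Finset.mem_erase.mpr ⟨hab.ne', Finset.mem_erase.mpr ⟨hbv, Finset.mem_univ _⟩⟩
    have hsplit : ∀ h : V → ℝ, ∑ w ∈ s0, h w = (∑ w ∈ s2, h w) + h b + h a := by
      intro h
      rw [← Finset.sum_erase_add s0 h ha0, ← Finset.sum_erase_add s1 h hb1]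
    have hs2mem : ∀ w ∈ s2, w ≠ a ∧ w ≠ b := by
      intro w hw
      rw [hs2, Finset.mem_erase, hs1, Finset.mem_erase] at hw
      exact ⟨hw.2.1, hw.1⟩
    have hsumG : invDeg G = (∑ w ∈ s2, (1 : ℝ) / (G.degree w)) + 1 / (G.degree b : ℝ)
        + 1 / (G.degree a : ℝ) + 1 / (G.degree v : ℝ) := by
      unfold invDeg
      rw [← Finset.sum_erase_add Finset.univ _ (Finset.mem_univ v), ← hs0,
        hsplit]
      have hx : ∀ w : V, (@SimpleGraph.degree V G w
          (@SimpleGraph.neighborSetFintype V G _ (fun a b => Classical.propDecidable (G.Adj a b)) w))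
          = G.degree w := fun w => by congr!
      simp only [hx]
    have hsumG' : invDeg G' = (∑ w ∈ s2, (1 : ℝ) / (G.degree w))
        + 1 / ((G.degree b - 1 : ℕ) : ℝ) + 1 / ((G.degree a - 1 : ℕ) : ℝ) := by
      rw [hsum1, hsplit g]
      have h2 : ∑ w ∈ s2, g w = ∑ w ∈ s2, (1 : ℝ) / (G.degree w) := by
        apply Finset.sum_congr rfl
        intro w hw
        obtain ⟨hwa, hwb⟩ := hs2mem w hw
        simp [hg, hwa, hwb]
      rw [h2, hg]
      simp [hab.ne, hab.ne']
    have hca : ((G.degree a - 1 : ℕ) : ℝ) = (G.degree a : ℝ) - 1 := by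
      have : 1 ≤ G.degree a := by omega
      push_cast [Nat.cast_sub this]
      ring
    have hcb : ((G.degree b - 1 : ℕ) : ℝ) = (G.degree b : ℝ) - 1 := by
      have : 1 ≤ G.degree b := by omega
      push_cast [Nat.cast_sub this]
      ring
    have hia : 1 / ((G.degree a - 1 : ℕ) : ℝ) ≤ 1 / (G.degree a : ℝ) + 1 / 6 := by
      rw [hca]
      exact one_div_sub_one_le (by exact_mod_cast hda)
    have hib : 1 / ((G.degree b - 1 : ℕ) : ℝ) ≤ 1 / (G.degree b : ℝ) + 1 / 6 := by
      rw [hcb]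
      exact one_div_sub_one_le (by exact_mod_cast hdb)
    have hv2 : 1 / (G.degree v : ℝ) = 1 / 2 := by rw [hdv]; norm_num
    rw [hsumG', hsumG, hv2]
    linarith
end

section
/- Let H be a connected component of G \ {v} for a cut vertex v, with |V(H)| = k, such that every vertex of H has degree at most k in G and v retains at least one neighbour outside H. Then r(G) ≥ r(G \ H), where G \ H is the graph obtained by deleting all vertices of H. -/
set_option maxHeartbeats 800000


theorem delete_component_invDeg {V : Type*} [Fintype V] [DecidableEq V]
    (G : SimpleGraph V) [DecidableRel G.Adj] (hconn : G.Connected)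
    (v : V) (H : Finset V) (hv : v ∉ H)
    (hnb : ∀ u ∈ H, ∀ w : V, G.Adj u w → w ∈ H ∨ w = v)
    (hdeg : ∀ u ∈ H, G.degree u ≤ H.card)
    (hout : ∃ w : V, G.Adj v w ∧ w ∉ H) :
    invDeg (G.induce {u | u ∉ H}) ≤ invDeg G := by
  classical
  set s : Set V := {u | u ∉ H} with hs
  set G' := G.induce s with hG'
  have hvs : v ∈ s := hv
  -- degrees are positive for vertices in H
  have hpos : ∀ u ∈ H, 1 ≤ G.degree u := by
    intro u hu
    have hne : u ≠ v := fun h => hv (h ▸ hu)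
    obtain ⟨w⟩ := hconn.preconnected u v
    cases w with
    | nil => exact absurd rfl hne
    | cons h p =>
      have := (G.degree_pos_iff_exists_adj u).2 ⟨_, h⟩
      omega
  -- induced degree equals degree when all neighbors stay
  have hdegEq : ∀ (u : V) (hu : u ∈ s), (∀ w, G.Adj u w → w ∈ s) →
      G'.degree ⟨u, hu⟩ = G.degree u := by
    intro u hu hall
    rw [← SimpleGraph.card_neighborSet_eq_degree, ← SimpleGraph.card_neighborSet_eq_degree]
    apply Fintype.card_congr
    refine ⟨fun x => ⟨x.1.1, x.2⟩,
      fun w => ⟨⟨w.1, hall w.1 w.2⟩, w.2⟩, ?_, ?_⟩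
    · intro x; ext; rfl
    · intro w; ext; rfl
  -- neighbors of vertices outside H ∪ {v} stay outside H
  have hstay : ∀ u, u ∈ s → u ≠ v → ∀ w, G.Adj u w → w ∈ s := by
    intro u hu hne w hw
    intro hwH
    rcases hnb w hwH u hw.symm with h | h
    · exact hu h
    · exact hne h
  -- induced degree at v is positive
  have hdv : 1 ≤ G'.degree ⟨v, hvs⟩ := by
    obtain ⟨w, hw, hwH⟩ := hout
    have : G'.Adj ⟨v, hvs⟩ ⟨w, hwH⟩ := by simp [hG', hw]
    have := (G'.degree_pos_iff_exists_adj ⟨v, hvs⟩).2 ⟨_, this⟩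
    omega
  have hL : invDeg G' = ∑ x : ↥s, (1 : ℝ) / (G'.degree x) := by
    unfold invDeg; congr!
  have hR : invDeg G = ∑ u : V, (1 : ℝ) / (G.degree u) := by
    unfold invDeg; congr!
  rw [hL, hR]
  -- rewrite the induced sum as a sum over Hᶜ
  set dv : ℕ := G'.degree ⟨v, hvs⟩ with hdvdef
  have hsubst : ∀ x : ↥s, (1 : ℝ) / (G'.degree x) =
      if (x : V) = v then (1 : ℝ) / dv else (1 : ℝ) / (G.degree (x : V)) := by
    intro x
    by_cases hxv : (x : V) = v
    · rw [if_pos hxv, show x = ⟨v, hvs⟩ from Subtype.ext hxv, hdvdef]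
    · rw [if_neg hxv, hdegEq x.1 x.2 (hstay x.1 x.2 hxv)]
  calc ∑ x : ↥s, (1 : ℝ) / (G'.degree x)
      = ∑ u ∈ Hᶜ, (if u = v then (1 : ℝ) / dv else (1 : ℝ) / (G.degree u)) := by
        rw [Finset.sum_congr rfl fun x _ => hsubst x]
        exact (Finset.sum_subtype Hᶜ (fun u => Finset.mem_compl)
          (fun u => if u = v then (1 : ℝ) / dv else (1 : ℝ) / (G.degree u))).symm
    _ = (1 : ℝ) / dv + ∑ u ∈ Hᶜ \ {v}, (1 : ℝ) / (G.degree u) := by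
        rw [Finset.sum_eq_add_sum_sdiff_singleton_of_mem (Finset.mem_compl.2 hv)
          (fun u => if u = v then (1 : ℝ) / dv else (1 : ℝ) / (G.degree u))]
        rw [if_pos rfl]
        congr 1
        exact Finset.sum_congr rfl fun u hu => by
          rw [if_neg (by simpa using (Finset.mem_sdiff.1 hu).2)]
    _ ≤ ((1 : ℝ) / (G.degree v) + ∑ u ∈ H, (1 : ℝ) / (G.degree u))
          + ∑ u ∈ Hᶜ \ {v}, (1 : ℝ) / (G.degree u) := by
        gcongr ?_ + _
        by_cases hH : H = ∅
        · subst hH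
          have : dv = G.degree v := hdegEq v hvs (fun w _ => by simp [hs])
          simp [this]
        · have h1 : (1 : ℝ) / dv ≤ 1 := by
            apply div_le_one_of_le₀
            · exact_mod_cast hdv
            · positivity
          have h2 : (1 : ℝ) ≤ ∑ u ∈ H, (1 : ℝ) / (G.degree u) := by
            have hcard : 0 < H.card := Finset.card_pos.2 (Finset.nonempty_iff_ne_empty.2 hH)
            calc (1 : ℝ) = ∑ u ∈ H, (1 : ℝ) / H.card := by
                  rw [Finset.sum_const, nsmul_eq_mul]
                  rw [mul_one_div_cancel (by exact_mod_cast hcard.ne')]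
              _ ≤ ∑ u ∈ H, (1 : ℝ) / (G.degree u) := by
                  apply Finset.sum_le_sum
                  intro u hu
                  apply one_div_le_one_div_of_le
                  · exact_mod_cast hpos u hu
                  · exact_mod_cast hdeg u hu
          have h3 : (0 : ℝ) ≤ 1 / (G.degree v) := by positivity
          linarith
    _ = ∑ u : V, (1 : ℝ) / (G.degree u) := by
        rw [add_comm ((1:ℝ)/(G.degree v)) _, add_assoc, ← Finset.sum_eq_add_sum_sdiff_singleton_of_mem (Finset.mem_compl.2 hv) (fun u => (1:ℝ)/(G.degree u))]
        rw [add_comm, Finset.sum_compl_add_sum]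
end
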